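/- Let Ω ⊆ ℝ^m be an open convex set and let f be holomorphic on the tube T_Ω = ℝ^m + iΩ and bounded on T_{Ω'} for every open Ω' with compact closure contained in Ω. If there exists y₀ ∈ Ω such that the function x ↦ f(x + iy₀) is almost periodic on ℝ^m, then f is almost periodic on T_Ω. -/

import Mathlib

open MeasureTheory Filter Topology Complex UniformConvergence

noncomputable section

/-- Embedding of a real vector as a complex vector (real parts). -/
def embR {m : ℕ} (t : Fin m → ℝ) : Fin m → ℂ := fun j => (t j : ℂ)

/-- The tube domain `T_Ω = ℝ^m + iΩ` over a base `Ω ⊆ ℝ^m`. -/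
def tube {m : ℕ} (Ω : Set (Fin m → ℝ)) : Set (Fin m → ℂ) :=
  {z | (fun j => (z j).im) ∈ Ω}

/-- Bohr almost periodicity for a continuous map `ℝ^m → X`: the set of translates is
relatively compact in the topology of uniform convergence on `ℝ^m`. -/
def AlmostPeriodic {m : ℕ} {X : Type*} [MetricSpace X] (g : (Fin m → ℝ) → X) : Prop :=
  Continuous g ∧
  IsCompact (closure {h : (Fin m → ℝ) →ᵤ X |
    ∃ t : Fin m → ℝ, h = UniformFun.ofFun fun x => g (x + t)})

/-- Almost periodicity on the tube `T_Ω`: for every open `Ω'` with compact closure contained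
in `Ω`, the set of translates is relatively compact in the topology of uniform convergence
on `T_{Ω'}`. -/
def APOnTube {m : ℕ} {X : Type*} [MetricSpace X]
    (f : (Fin m → ℂ) → X) (Ω : Set (Fin m → ℝ)) : Prop :=
  ContinuousOn f (tube Ω) ∧
  ∀ Ω' : Set (Fin m → ℝ), IsOpen Ω' → IsCompact (closure Ω') → closure Ω' ⊆ Ω →
    IsCompact (closure {h : ↥(tube Ω') →ᵤ X |
      ∃ t : Fin m → ℝ, h = UniformFun.ofFun fun z : ↥(tube Ω') => f (↑z + embR t)})

/-- Holomorphic almost periodic function on the tube `T_Ω`. -/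
def HolomorphicAP {m : ℕ} (f : (Fin m → ℂ) → ℂ) (Ω : Set (Fin m → ℝ)) : Prop :=
  DifferentiableOn ℂ f (tube Ω) ∧ APOnTube f Ω



lemma isOpen_tube {m : ℕ} {U : Set (Fin m → ℝ)} (hU : IsOpen U) : IsOpen (tube U) :=
  hU.preimage (continuous_pi fun j => Complex.continuous_im.comp (continuous_apply j))

lemma mem_tube_add_embR {m : ℕ} {U : Set (Fin m → ℝ)} {z : Fin m → ℂ} (hz : z ∈ tube U)
    (t : Fin m → ℝ) : z + embR t ∈ tube U := by
  have : (fun j => ((z + embR t) j).im) = fun j => (z j).im := by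
    funext j; simp [embR]
  show (fun j => ((z + embR t) j).im) ∈ U
  rw [this]; exact hz

open Complex.HadamardThreeLines in
lemma tube_bound {m : ℕ} {U : Set (Fin m → ℝ)} (hUo : IsOpen U) (hUconv : Convex ℝ U)
    {F : (Fin m → ℂ) → ℂ} (hF : DifferentiableOn ℂ F (tube U))
    {M δ : ℝ} (hM : ∀ z ∈ tube U, ‖F z‖ ≤ M)
    {y₀ y₂ : Fin m → ℝ} (h0 : y₀ ∈ U) (h2 : y₂ ∈ U)
    (hδ : ∀ x : Fin m → ℝ, ‖F (fun j => (x j : ℂ) + (y₀ j : ℂ) * Complex.I)‖ ≤ δ)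
    {u : ℝ} (hu0 : 0 ≤ u) (hu1 : u ≤ 1) (x : Fin m → ℝ) :
    ‖F (fun j => (x j : ℂ) + ((((1 - u) • y₀ + u • y₂) j : ℝ) : ℂ) * Complex.I)‖
      ≤ δ ^ (1 - u) * M ^ u := by
  set A : ℂ → (Fin m → ℂ) :=
    fun ζ j => (x j : ℂ) + (y₀ j : ℂ) * Complex.I
      + ζ * (Complex.I * ((y₂ j : ℂ) - (y₀ j : ℂ))) with hA
  have hAim : ∀ (ζ : ℂ) (j : Fin m), (A ζ j).im = y₀ j + ζ.re * (y₂ j - y₀ j) := by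
    intro ζ j
    simp [hA, Complex.add_im, Complex.mul_im, Complex.mul_re]
    try ring
  have hAre : ∀ (ζ : ℂ) (j : Fin m), (A ζ j).re = x j - ζ.im * (y₂ j - y₀ j) := by
    intro ζ j
    simp [hA, Complex.add_re, Complex.mul_re, Complex.mul_im]
    try ring
  have hmem : ∀ ζ : ℂ, ζ.re ∈ Set.Icc (0:ℝ) 1 → A ζ ∈ tube U := by
    intro ζ hζ
    have hvec : (fun j => (A ζ j).im) = (1 - ζ.re) • y₀ + ζ.re • y₂ := by
      funext j
      simp [hAim ζ j, Pi.add_apply, Pi.smul_apply, smul_eq_mul]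
      ring
    show (fun j => (A ζ j).im) ∈ U
    rw [hvec]
    exact hUconv h0 h2 (by linarith [hζ.2]) hζ.1 (by ring)
  have hAdiff : Differentiable ℂ A := by
    apply differentiable_pi.mpr
    intro j
    exact (differentiable_const _).add (differentiable_id.mul (differentiable_const _))
  set D : Set ℂ := A ⁻¹' (tube U) with hD
  have hDopen : IsOpen D := (isOpen_tube hUo).preimage hAdiff.continuous
  have hstripD : verticalClosedStrip 0 1 ⊆ D := fun ζ hζ => hmem ζ hζ
  have hφdiff : DifferentiableOn ℂ (F ∘ A) D :=
    hF.comp (hAdiff.differentiableOn) (fun ζ hζ => hζ)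
  have hclosure : closure (verticalStrip 0 1) ⊆ verticalClosedStrip 0 1 :=
    closure_minimal (fun z hz => ⟨le_of_lt hz.1, le_of_lt hz.2⟩)
      (IsClosed.preimage Complex.continuous_re isClosed_Icc)
  have hd : DiffContOnCl ℂ (F ∘ A) (verticalStrip 0 1) := by
    constructor
    · exact hφdiff.mono (fun z hz => hstripD ⟨le_of_lt hz.1, le_of_lt hz.2⟩)
    · exact (hφdiff.continuousOn).mono (fun z hz => hstripD (hclosure hz))
  have hB : BddAbove ((norm ∘ (F ∘ A)) '' verticalClosedStrip 0 1) := by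
    refine ⟨M, ?_⟩
    rintro - ⟨ζ, hζ, rfl⟩
    exact hM _ (hmem ζ hζ)
  have ha : ∀ ζ ∈ Complex.re ⁻¹' {0}, ‖(F ∘ A) ζ‖ ≤ δ := by
    intro ζ hζ
    have hζ0 : ζ.re = 0 := hζ
    have : A ζ = fun j => ((x j - ζ.im * (y₂ j - y₀ j) : ℝ) : ℂ) + (y₀ j : ℂ) * Complex.I := by
      funext j
      apply Complex.ext
      · simp [hAre ζ j]
      · simp [hAim ζ j, hζ0]
    show ‖F (A ζ)‖ ≤ δ
    rw [this]
    exact hδ _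
  have hb : ∀ ζ ∈ Complex.re ⁻¹' {1}, ‖(F ∘ A) ζ‖ ≤ M := by
    intro ζ hζ
    exact hM _ (hmem ζ ⟨by rw [Set.mem_preimage, Set.mem_singleton_iff] at hζ; rw [hζ]; norm_num,
      by rw [Set.mem_preimage, Set.mem_singleton_iff] at hζ; rw [hζ]⟩)
  have hz : (u : ℂ) ∈ verticalClosedStrip 0 1 := by
    simp [verticalClosedStrip, Set.mem_preimage, Complex.ofReal_re]
    exact ⟨hu0, hu1⟩
  have key := norm_le_interp_of_mem_verticalClosedStrip₀₁' (F ∘ A) hz hd hB ha hb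
  have hAu : A (u : ℂ) = fun j => (x j : ℂ) + ((((1 - u) • y₀ + u • y₂) j : ℝ) : ℂ) * Complex.I := by
    funext j
    apply Complex.ext
    · simp [hAre]
    · simp [hAim, Pi.add_apply, Pi.smul_apply, smul_eq_mul]
      ring
  simpa [Function.comp, hAu, Complex.ofReal_re] using key

open Metric Bornology in
lemma exists_good_U {m : ℕ} {Ω Ω' : Set (Fin m → ℝ)} (hΩo : IsOpen Ω) (hΩconv : Convex ℝ Ω)
    (hΩ'c : IsCompact (closure Ω')) (hΩ'Ω : closure Ω' ⊆ Ω) {y₀ : Fin m → ℝ} (hy₀ : y₀ ∈ Ω) :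
    ∃ (U : Set (Fin m → ℝ)) (b : ℝ), IsOpen U ∧ Convex ℝ U ∧ IsCompact (closure U) ∧
      closure U ⊆ Ω ∧ y₀ ∈ U ∧ 0 < b ∧
      ∀ y ∈ closure Ω', y₀ + (1 + b) • (y - y₀) ∈ U := by
  set K := insert y₀ (closure Ω') with hKdef
  have hK : IsCompact K := hΩ'c.insert y₀
  have hKΩ : K ⊆ Ω := Set.insert_subset hy₀ hΩ'Ω
  obtain ⟨η, hηpos, hη⟩ := hK.exists_cthickening_subset_open hΩo hKΩ
  set U := Metric.thickening (η/2) (convexHull ℝ K) with hUdef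
  have hthickΩ : Metric.thickening η (convexHull ℝ K) ⊆ Ω := by
    intro p hp
    obtain ⟨q, hq, hpq⟩ := Metric.mem_thickening_iff.mp hp
    set v := p - q with hv
    have hpv : p = v +ᵥ q := by simp [hv]
    have : p ∈ (v +ᵥ ·) '' convexHull ℝ K := ⟨q, hq, by simp [hv]⟩
    rw [Set.image_vadd, ← convexHull_vadd] at this
    have hsub : (v +ᵥ ·) '' K ⊆ Metric.cthickening η K := by
      rintro - ⟨k, hk, rfl⟩
      apply Metric.mem_cthickening_of_dist_le _ k _ _ hk
      have : dist (v +ᵥ k) k = ‖v‖ := by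
        simp [dist_eq_norm]
      rw [this]
      have : ‖v‖ = dist p q := by rw [dist_eq_norm, hv]
      rw [this]
      exact hpq.le
    rw [Set.image_vadd] at hsub
    exact convexHull_min (hsub.trans hη) hΩconv this
  have hUsub : closure U ⊆ Ω := by
    refine (closure_thickening_subset_cthickening _ _).trans ?_
    exact (cthickening_subset_thickening' hηpos (half_lt_self hηpos) _).trans hthickΩ
  have hUopen : IsOpen U := Metric.isOpen_thickening
  have hUconv : Convex ℝ U := (convex_convexHull ℝ K).thickening _
  have hUcomp : IsCompact (closure U) := by
    apply Metric.isCompact_of_isClosed_isBounded isClosed_closure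
    exact (((isBounded_convexHull.mpr hK.isBounded).thickening).closure)
  obtain ⟨R, hR⟩ := hK.isBounded.subset_closedBall y₀
  have hy₀U : y₀ ∈ U :=
    Metric.self_subset_thickening (half_pos hηpos) _
      (subset_convexHull ℝ K (Set.mem_insert _ _))
  refine ⟨U, (η/2) / (|R| + 1), hUopen, hUconv, hUcomp, hUsub, hy₀U, ?_, ?_⟩
  · positivity
  · intro y hy
    set b := (η/2) / (|R| + 1) with hb
    have hbpos : 0 < b := by positivity
    have hyK : y ∈ K := Set.mem_insert_of_mem _ hy
    have hdist : dist (y₀ + (1 + b) • (y - y₀)) y < η / 2 := by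
      have heq : y₀ + (1 + b) • (y - y₀) - y = b • (y - y₀) := by
        module
      rw [dist_eq_norm, heq, norm_smul]
      have h1 : ‖y - y₀‖ ≤ |R| := by
        have := hR hyK
        rw [Metric.mem_closedBall, dist_comm] at this
        calc ‖y - y₀‖ = dist y y₀ := (dist_eq_norm y y₀).symm
        _ ≤ R := by rwa [dist_comm]
        _ ≤ |R| := le_abs_self R
      calc ‖b‖ * ‖y - y₀‖ ≤ b * |R| := by
            rw [Real.norm_eq_abs, abs_of_pos hbpos]
            exact mul_le_mul_of_nonneg_left h1 hbpos.le
        _ < b * (|R| + 1) := by nlinarith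
        _ = η / 2 := by
            rw [hb]
            field_simp
    exact Metric.mem_thickening_iff.mpr ⟨y, subset_convexHull ℝ K hyK, hdist⟩


/-- a holomorphic function on a tube domain, bounded on every relatively
compact subtube, which is almost periodic on one horizontal hyperplane `ℝ^m + iy₀`, is
almost periodic on the whole tube. -/
theorem ap_on_one_hyperplane_implies_ap_on_tube
    {m : ℕ} (Ω : Set (Fin m → ℝ)) (hΩo : IsOpen Ω) (hΩconv : Convex ℝ Ω)
    (f : (Fin m → ℂ) → ℂ) (hf : DifferentiableOn ℂ f (tube Ω))
    (hbd : ∀ Ω' : Set (Fin m → ℝ), IsOpen Ω' → IsCompact (closure Ω') → closure Ω' ⊆ Ω →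
      ∃ M : ℝ, ∀ z ∈ tube Ω', ‖f z‖ ≤ M)
    (y₀ : Fin m → ℝ) (hy₀ : y₀ ∈ Ω)
    (hap : AlmostPeriodic fun x : Fin m → ℝ =>
      f fun j => (x j : ℂ) + (y₀ j : ℂ) * Complex.I) :
    APOnTube f Ω := by
  set g : (Fin m → ℝ) → ℂ := fun x => f fun j => (x j : ℂ) + (y₀ j : ℂ) * Complex.I with hg
  constructor
  · exact hf.continuousOn
  intro Ω' hΩ'o hΩ'c hΩ'Ω
  obtain ⟨U, b, hUo, hUconv, hUcomp, hUΩ, hy₀U, hbpos, hfar⟩ :=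
    exists_good_U hΩo hΩconv hΩ'c hΩ'Ω hy₀
  have hUsubΩ : U ⊆ Ω := subset_closure.trans hUΩ
  obtain ⟨M₀, hM₀⟩ := hbd U hUo hUcomp hUΩ
  set M : ℝ := |M₀| + 1 with hMdef
  have hMpos : 0 < M := by positivity
  have hM : ∀ z ∈ tube U, ‖f z‖ ≤ M := by
    intro z hz
    calc ‖f z‖ = ‖f z‖ := rfl
      _ ≤ M₀ := hM₀ z hz
      _ ≤ |M₀| := le_abs_self _
      _ ≤ M := by simp [hMdef]
  set u : ℝ := 1 / (1 + b) with hu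
  have h1b : (1:ℝ) < 1 + b := by linarith
  have hu0 : 0 < u := by positivity
  have hu1 : u < 1 := by
    rw [hu, div_lt_one (by linarith)]; exact h1b
  set c : ℝ := 1 - u with hc
  have hcpos : 0 < c := by simp [hc]; linarith
  -- reduce to total boundedness
  apply TotallyBounded.isCompact_of_isClosed _ isClosed_closure
  apply TotallyBounded.closure
  rw [(UniformFun.hasBasis_uniformity_of_basis (↥(tube Ω')) ℂ
    Metric.uniformity_basis_dist).totallyBounded_iff]
  intro ε hε
  -- choose δ
  set P : ℝ := min ((ε/2) / (2*M) ^ u) 1 with hP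
  have h2Mu : (0:ℝ) < (2*M) ^ u := Real.rpow_pos_of_pos (by linarith) _
  have hPpos : 0 < P := by
    apply lt_min _ one_pos
    positivity
  set δ : ℝ := P ^ (1/c) with hδdef
  have hδpos : 0 < δ := Real.rpow_pos_of_pos hPpos _
  have hδc : δ ^ c = P := by
    rw [hδdef, ← Real.rpow_mul hPpos.le, one_div_mul_cancel hcpos.ne', Real.rpow_one]
  have hkey : δ ^ c * (2*M) ^ u ≤ ε/2 := by
    rw [hδc]
    calc P * (2*M) ^ u ≤ ((ε/2) / (2*M) ^ u) * (2*M) ^ u :=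
          mul_le_mul_of_nonneg_right (min_le_left _ _) h2Mu.le
      _ = ε/2 := div_mul_cancel₀ _ (ne_of_gt h2Mu)
  -- get a finite net of translates on the hyperplane
  obtain ⟨hgcont, hgcomp⟩ := hap
  have hTB : TotallyBounded {h : (Fin m → ℝ) →ᵤ ℂ |
      ∃ t : Fin m → ℝ, h = UniformFun.ofFun fun x => g (x + t)} :=
    hgcomp.totallyBounded.subset subset_closure
  have hVmem : UniformFun.gen (Fin m → ℝ) ℂ {p : ℂ × ℂ | dist p.1 p.2 < δ}
      ∈ uniformity ((Fin m → ℝ) →ᵤ ℂ) :=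
    (UniformFun.hasBasis_uniformity_of_basis (Fin m → ℝ) ℂ
      Metric.uniformity_basis_dist).mem_of_mem hδpos
  obtain ⟨T, hTsub, hTfin, hTcov⟩ := totallyBounded_iff_subset.mp hTB _ hVmem
  have hTsh : ∀ h ∈ T, ∃ t : Fin m → ℝ, h = UniformFun.ofFun fun x => g (x + t) :=
    fun h hh => hTsub hh
  choose! sh hsh using hTsh
  refine ⟨(fun h => UniformFun.ofFun fun z : ↥(tube Ω') => f (↑z + embR (sh h))) '' T,
    hTfin.image _, ?_⟩
  rintro - ⟨t, rfl⟩
  have hgt : UniformFun.ofFun (fun x => g (x + t)) ∈ ⋃ y ∈ T,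
      {x | (x, y) ∈ UniformFun.gen (Fin m → ℝ) ℂ {p : ℂ × ℂ | dist p.1 p.2 < δ}} :=
    hTcov ⟨t, rfl⟩
  rw [Set.mem_iUnion₂] at hgt
  obtain ⟨h₀, hh₀T, hpair⟩ := hgt
  set s : Fin m → ℝ := sh h₀ with hsdef
  have hh₀ : h₀ = UniformFun.ofFun fun x => g (x + s) := hsh h₀ hh₀T
  have hpair' : ∀ x : Fin m → ℝ, dist (g (x + t)) (g (x + s)) < δ := by
    intro x
    have := hpair
    rw [hh₀] at this
    exact this x
  -- the key estimate on the subtube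
  have hest : ∀ z : ↥(tube Ω'),
      dist (f (↑z + embR t)) (f (↑z + embR s)) ≤ δ ^ c * (2*M) ^ u := by
    intro z
    set y : Fin m → ℝ := fun j => ((z : Fin m → ℂ) j).im with hy
    have hyΩ' : y ∈ Ω' := z.2
    have hyc : y ∈ closure Ω' := subset_closure hyΩ'
    set y₂ : Fin m → ℝ := y₀ + (1 + b) • (y - y₀) with hy₂
    have h2 : y₂ ∈ U := hfar y hyc
    set F : (Fin m → ℂ) → ℂ := fun w => f (w + embR t) - f (w + embR s) with hF
    have hshift : ∀ r : Fin m → ℝ, DifferentiableOn ℂ (fun w => f (w + embR r)) (tube U) := by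
      intro r
      apply DifferentiableOn.comp hf
        ((differentiable_id.add_const (embR r)).differentiableOn)
      intro w hw
      exact ((hUsubΩ : U ⊆ Ω) <| mem_tube_add_embR hw r : _)
    have hFdiff : DifferentiableOn ℂ F (tube U) := (hshift t).sub (hshift s)
    have hFM : ∀ w ∈ tube U, ‖F w‖ ≤ 2*M := by
      intro w hw
      calc ‖F w‖ ≤ ‖f (w + embR t)‖ + ‖f (w + embR s)‖ := norm_sub_le _ _
        _ ≤ M + M := add_le_add (hM _ (mem_tube_add_embR hw t)) (hM _ (mem_tube_add_embR hw s))
        _ = 2*M := by ring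
    have hFδ : ∀ x : Fin m → ℝ,
        ‖F (fun j => (x j : ℂ) + (y₀ j : ℂ) * Complex.I)‖ ≤ δ := by
      intro x
      have hrw : ∀ r : Fin m → ℝ,
          (fun j => (x j : ℂ) + (y₀ j : ℂ) * Complex.I) + embR r
            = fun j => (((x + r) j : ℝ) : ℂ) + (y₀ j : ℂ) * Complex.I := by
        intro r; funext j; simp [embR]; push_cast; ring
      have : F (fun j => (x j : ℂ) + (y₀ j : ℂ) * Complex.I) = g (x + t) - g (x + s) := by
        simp only [hF, hrw, hg]
      rw [this, ← dist_eq_norm]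
      exact (hpair' x).le
    have hmain := tube_bound hUo hUconv hFdiff hFM hy₀U h2 hFδ hu0.le hu1.le
      (fun j => ((z : Fin m → ℂ) j).re)
    have hcomb : (1 - u) • y₀ + u • y₂ = y := by
      funext j
      simp [hy₂, Pi.add_apply, Pi.smul_apply, smul_eq_mul, hu]
      field_simp
      ring
    have hzpt : (fun j => ((((z : Fin m → ℂ) j).re : ℝ) : ℂ)
        + ((y j : ℝ) : ℂ) * Complex.I) = (z : Fin m → ℂ) := by
      funext j
      simp only [hy, Complex.ofReal_im, Complex.ofReal_re]
      exact Complex.re_add_im _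
    rw [hcomb, hzpt] at hmain
    rw [dist_eq_norm]
    exact hmain
  -- wrap up
  rw [Set.mem_iUnion₂]
  refine ⟨_, ⟨h₀, hh₀T, rfl⟩, ?_⟩
  intro z
  show dist (f (↑z + embR t)) (f (↑z + embR (sh h₀))) < ε
  calc dist (f (↑z + embR t)) (f (↑z + embR s)) ≤ δ ^ c * (2*M) ^ u := hest z
    _ ≤ ε/2 := hkey
    _ < ε := by linarith


end
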